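/- Let U ⊆ ℂ be open, ζ ∈ U, A : U → M_r(ℂ) holomorphic, and let p, q ∈ ℂ^r be column vectors with A(ζ)·p = 0. Then the matrix function z ↦ A(z)·(1 − p q^T/(z − ζ)), defined on U \ {ζ}, extends holomorphically to all of U. -/
import Mathlib


open Complex Matrix Set

attribute [local instance] Matrix.linftyOpNormedRing Matrix.linftyOpNormedAlgebra

lemma mul_vecMulVec_aux {r : ℕ} (M : Matrix (Fin r) (Fin r) ℂ) (p q : Fin r → ℂ) :
    M * Matrix.vecMulVec p q = Matrix.vecMulVec (M *ᵥ p) q := by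
  ext i j
  simp [Matrix.mul_apply, Matrix.vecMulVec_apply, Matrix.mulVec, dotProduct,
    Finset.sum_mul, mul_assoc]

/-- If `A` is holomorphic on `U`, `ζ ∈ U` and `A(ζ)p = 0`, then
`z ↦ A(z)(1 − pqᵀ/(z − ζ))` extends holomorphically across `ζ`. -/
theorem statement8 (r : ℕ) (U : Set ℂ) (hU : IsOpen U) (ζ : ℂ) (hζ : ζ ∈ U)
    (A : ℂ → Matrix (Fin r) (Fin r) ℂ) (hA : DifferentiableOn ℂ A U)
    (p q : Fin r → ℂ) (hp : A ζ *ᵥ p = 0) :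
    ∃ B : ℂ → Matrix (Fin r) (Fin r) ℂ, DifferentiableOn ℂ B U ∧
      ∀ z ∈ U \ {ζ},
        B z = A z * ((1 : Matrix (Fin r) (Fin r) ℂ) - (z - ζ)⁻¹ • Matrix.vecMulVec p q) := by
  refine ⟨fun z => A z - dslope A ζ z * Matrix.vecMulVec p q, ?_, ?_⟩
  · exact hA.sub (((differentiableOn_dslope (hU.mem_nhds hζ)).2 hA).mul
      (differentiableOn_const _))
  · rintro z ⟨hzU, hzζ⟩
    have hz : z ≠ ζ := hzζ
    show A z - dslope A ζ z * Matrix.vecMulVec p q = _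
    rw [dslope_of_ne _ hz, slope_def_module, smul_mul_assoc, sub_mul,
      mul_vecMulVec_aux (A ζ), hp]
    ext i j
    simp [Matrix.vecMulVec_apply, mul_sub, mul_comm]
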